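/- In the ring R = k[[x,y,z,w]]/(xy − zw), the ideal Ann.Coker of the diagonal matrix A = diag(x, z) equals (x) ∩ (z) = (xz, xy), and this ideal is not principal. -/

import Mathlib

open MvPowerSeries Finsupp

namespace Stmt12

open scoped Classical

variable {k : Type*} [CommRing k] {α β γ : Type*} [Fintype α] [Fintype β] [Fintype γ]

/-- pointwise bound of the fiber of `mapDomain σ` over `d` -/
noncomputable def bnd (σ : α → β) (d : β →₀ ℕ) : α →₀ ℕ :=
  Finsupp.equivFunOnFinite.symm fun i => d (σ i)

lemma le_bnd {σ : α → β} {d : β →₀ ℕ} {e : α →₀ ℕ} (h : Finsupp.mapDomain σ e = d) :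
    e ≤ bnd σ d := by
  rw [Finsupp.le_def]
  intro i
  have h1 : Finsupp.mapDomain σ e = Finsupp.mapDomain σ (Finsupp.erase i e) +
      Finsupp.single (σ i) (e i) := by
    conv_lhs => rw [← Finsupp.erase_add_single i e]
    rw [Finsupp.mapDomain_add, Finsupp.mapDomain_single]
  have h2 : e i ≤ Finsupp.mapDomain σ e (σ i) := by
    rw [h1]; simp
  rw [h] at h2
  simpa [bnd] using h2

/-- The fiber of `mapDomain σ` over `d`, as a finset. -/
noncomputable def fib (σ : α → β) (d : β →₀ ℕ) : Finset (α →₀ ℕ) :=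
  (Finset.Iic (bnd σ d)).filter (fun e => Finsupp.mapDomain σ e = d)

lemma mem_fib {σ : α → β} {d : β →₀ ℕ} {e : α →₀ ℕ} :
    e ∈ fib σ d ↔ Finsupp.mapDomain σ e = d := by
  simp only [fib, Finset.mem_filter, Finset.mem_Iic, and_iff_right_iff_imp]
  exact le_bnd

/-- Renaming the variables of a multivariate power series along `σ`. -/
noncomputable def rename (σ : α → β) (f : MvPowerSeries α k) : MvPowerSeries β k :=
  fun d => ∑ e ∈ fib σ d, f e

lemma coeff_rename (σ : α → β) (f : MvPowerSeries α k) (d : β →₀ ℕ) :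
    coeff d (rename σ f) = ∑ e ∈ fib σ d, coeff e f := rfl

lemma rename_one (σ : α → β) : rename σ (1 : MvPowerSeries α k) = 1 := by
  apply MvPowerSeries.ext; intro d
  rw [coeff_rename]
  simp only [MvPowerSeries.coeff_one]
  rw [Finset.sum_ite_eq' (fib σ d) (0 : α →₀ ℕ) (fun _ => (1 : k))]
  simp only [mem_fib, Finsupp.mapDomain_zero]
  by_cases h : d = 0 <;> simp [h, eq_comm]

lemma rename_mul (σ : α → β) (f g : MvPowerSeries α k) :
    rename σ (f * g) = rename σ f * rename σ g := by
  apply MvPowerSeries.ext; intro d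
  rw [coeff_rename, MvPowerSeries.coeff_mul]
  simp only [MvPowerSeries.coeff_mul, coeff_rename, Finset.sum_mul_sum]
  simp only [← Finset.sum_product']
  rw [Finset.sum_sigma' (fib σ d) (fun e => Finset.HasAntidiagonal.antidiagonal e)
      (fun _ p => coeff p.1 f * coeff p.2 g)]
  rw [Finset.sum_sigma' (Finset.HasAntidiagonal.antidiagonal d) (fun p => (fib σ p.1) ×ˢ (fib σ p.2))
      (fun _ q => coeff q.1 f * coeff q.2 g)]
  refine Finset.sum_nbij' (fun x => ⟨(Finsupp.mapDomain σ x.2.1, Finsupp.mapDomain σ x.2.2), x.2⟩)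
    (fun y => ⟨y.2.1 + y.2.2, y.2⟩) ?_ ?_ ?_ ?_ ?_
  · rintro ⟨e, e1, e2⟩ hx
    simp only [Finset.mem_sigma, mem_fib, Finset.HasAntidiagonal.mem_antidiagonal] at hx
    obtain ⟨he, hee⟩ := hx
    simp only [Finset.mem_sigma, Finset.HasAntidiagonal.mem_antidiagonal, Finset.mem_product, mem_fib]
    refine ⟨?_, by trivial, by trivial⟩
    rw [← Finsupp.mapDomain_add, hee, he]
  · rintro ⟨⟨d1, d2⟩, e1, e2⟩ hy
    simp only [Finset.mem_sigma, Finset.HasAntidiagonal.mem_antidiagonal, Finset.mem_product, mem_fib] at hy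
    obtain ⟨hd, h1, h2⟩ := hy
    simp only [Finset.mem_sigma, mem_fib, Finset.HasAntidiagonal.mem_antidiagonal]
    exact ⟨by rw [Finsupp.mapDomain_add, h1, h2, hd], by trivial⟩
  · rintro ⟨e, e1, e2⟩ hx
    simp only [Finset.mem_sigma, mem_fib, Finset.HasAntidiagonal.mem_antidiagonal] at hx
    simp [hx.2]
  · rintro ⟨⟨d1, d2⟩, e1, e2⟩ hy
    simp only [Finset.mem_sigma, Finset.HasAntidiagonal.mem_antidiagonal, Finset.mem_product, mem_fib] at hy
    simp [hy.2.1, hy.2.2]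
  · rintro ⟨e, e1, e2⟩ _
    rfl

lemma rename_X (σ : α → β) (i : α) :
    rename σ (X i : MvPowerSeries α k) = X (σ i) := by
  apply MvPowerSeries.ext; intro d
  rw [coeff_rename]
  simp only [MvPowerSeries.coeff_X]
  rw [Finset.sum_ite_eq' (fib σ d) (Finsupp.single i 1) (fun _ => (1 : k))]
  simp only [mem_fib, Finsupp.mapDomain_single]
  by_cases h : d = Finsupp.single (σ i) 1 <;> simp [h, eq_comm]

/-- Renaming as a ring hom. -/
noncomputable def renameHom (σ : α → β) : MvPowerSeries α k →+* MvPowerSeries β k where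
  toFun := rename σ
  map_one' := rename_one σ
  map_mul' := rename_mul σ
  map_zero' := by apply MvPowerSeries.ext; intro d; rw [coeff_rename]; simp
  map_add' f g := by
    apply MvPowerSeries.ext; intro d
    rw [coeff_rename]
    simp [coeff_rename, Finset.sum_add_distrib]

lemma rename_comp (σ : α → β) (τ : β → γ) (f : MvPowerSeries α k) :
    rename τ (rename σ f) = rename (τ ∘ σ) f := by
  apply MvPowerSeries.ext; intro d
  rw [coeff_rename, coeff_rename]
  simp only [coeff_rename]
  rw [Finset.sum_sigma' (fib τ d) (fun e' => fib σ e') (fun _ e => coeff e f)]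
  refine Finset.sum_nbij' (fun x => x.2) (fun e => ⟨Finsupp.mapDomain σ e, e⟩) ?_ ?_ ?_ ?_ ?_
  · rintro ⟨e', e⟩ hx
    simp only [Finset.mem_sigma, mem_fib] at hx
    rw [mem_fib, Finsupp.mapDomain_comp, hx.2, hx.1]
  · intro e he
    rw [mem_fib] at he
    refine Finset.mem_sigma.mpr ⟨mem_fib.mpr ?_, mem_fib.mpr rfl⟩
    rw [← Finsupp.mapDomain_comp, he]
  · rintro ⟨e', e⟩ hx
    simp only [Finset.mem_sigma, mem_fib] at hx
    simp [hx.2]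
  · intro e _; rfl
  · rintro ⟨e', e⟩ _; rfl


section PZero

variable (j : α)

/-- The ring hom `MvPowerSeries α k → MvPowerSeries α k` substituting `X j := 0`. -/
noncomputable def pzero : MvPowerSeries α k →+* MvPowerSeries α k where
  toFun f := fun d => if d j = 0 then coeff d f else 0
  map_one' := by
    apply MvPowerSeries.ext; intro d
    show (if d j = 0 then coeff d 1 else 0) = coeff d 1
    simp only [MvPowerSeries.coeff_one]
    by_cases h : d = 0
    · simp [h]
    · simp only [h, if_neg h, ite_false]
      split <;> rfl
  map_mul' f g := by
    apply MvPowerSeries.ext; intro d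
    show (if d j = 0 then coeff d (f * g) else 0) = coeff d ((id (α := MvPowerSeries α k) fun d => if d j = 0 then coeff d f else 0) *
      (id (α := MvPowerSeries α k) fun d => if d j = 0 then coeff d g else 0))
    rw [MvPowerSeries.coeff_mul, MvPowerSeries.coeff_mul]
    by_cases h : d j = 0
    · rw [if_pos h]
      refine Finset.sum_congr rfl ?_
      rintro ⟨e1, e2⟩ hp
      rw [Finset.HasAntidiagonal.mem_antidiagonal] at hp
      have h1 : e1 j = 0 ∧ e2 j = 0 := by
        have : e1 j + e2 j = 0 := by
          have := congrArg (fun u => u j) hp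
          simpa using this.trans h
        omega
      show coeff e1 f * coeff e2 g =
        (if e1 j = 0 then coeff e1 f else 0) * (if e2 j = 0 then coeff e2 g else 0)
      rw [if_pos h1.1, if_pos h1.2]
    · rw [if_neg h]
      symm
      refine Finset.sum_eq_zero ?_
      rintro ⟨e1, e2⟩ hp
      rw [Finset.HasAntidiagonal.mem_antidiagonal] at hp
      show (if e1 j = 0 then coeff e1 f else 0) * (if e2 j = 0 then coeff e2 g else 0) = 0
      by_cases h1 : e1 j = 0
      · by_cases h2 : e2 j = 0
        · exfalso
          apply h
          have := congrArg (fun u => u j) hp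
          simpa [h1, h2] using this.symm
        · rw [if_neg h2, mul_zero]
      · rw [if_neg h1, zero_mul]
  map_zero' := by
    apply MvPowerSeries.ext; intro d
    show (if d j = 0 then coeff d 0 else 0) = coeff d 0
    simp
  map_add' f g := by
    apply MvPowerSeries.ext; intro d
    show (if d j = 0 then coeff d (f + g) else 0) = _
    show _ = (if d j = 0 then coeff d f else 0) + (if d j = 0 then coeff d g else 0)
    split <;> simp

lemma coeff_pzero (f : MvPowerSeries α k) (d : α →₀ ℕ) :
    coeff d (pzero j f) = if d j = 0 then coeff d f else 0 := rfl

lemma pzero_eq_zero_iff {f : MvPowerSeries α k} :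
    pzero j f = 0 ↔ (X j : MvPowerSeries α k) ∣ f := by
  rw [MvPowerSeries.X_dvd_iff]
  constructor
  · intro h m hm
    have := congrArg (fun u => coeff m u) h
    simpa [coeff_pzero, hm] using this
  · intro h
    apply MvPowerSeries.ext; intro d
    rw [coeff_pzero]
    by_cases hd : d j = 0
    · simp [hd, h d hd]
    · simp [hd]

lemma pzero_X_self : pzero j (X j : MvPowerSeries α k) = 0 := by
  rw [pzero_eq_zero_iff]

lemma pzero_X_of_ne {i : α} (h : i ≠ j) : pzero j (X i : MvPowerSeries α k) = X i := by
  apply MvPowerSeries.ext; intro d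
  rw [coeff_pzero]
  by_cases hd : d j = 0
  · rw [if_pos hd]
  · rw [if_neg hd]
    rw [MvPowerSeries.coeff_X]
    rw [if_neg]
    intro hds
    apply hd
    rw [hds]
    simp [Finsupp.single_apply, h]

lemma X_ne_zero [Nontrivial k] (i : α) : (X i : MvPowerSeries α k) ≠ 0 := by
  intro h
  have := congrArg (fun u => coeff (Finsupp.single i 1) u) h
  simp [MvPowerSeries.coeff_X] at this

/-- If `X j ∤ a` with `pzero j a = a` and `X j ∣ a * f`, then `X j ∣ f`. -/
lemma X_dvd_of_dvd_mul [NoZeroDivisors k] {i j : α} (h : i ≠ j) {f : MvPowerSeries α k}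
    [Nontrivial k] (hd : (X j : MvPowerSeries α k) ∣ X i * f) :
    (X j : MvPowerSeries α k) ∣ f := by
  rw [← pzero_eq_zero_iff] at hd ⊢
  rw [map_mul, pzero_X_of_ne j h] at hd
  rcases mul_eq_zero.mp hd with h0 | h0
  · exact absurd h0 (X_ne_zero i)
  · exact h0

end PZero

end Stmt12



/-- `Ann.Coker(A) = Ann(R^m / A(R^n))`. -/
noncomputable def annCoker {R : Type*} [CommRing R] {m n : ℕ}
    (A : Matrix (Fin m) (Fin n) R) : Ideal R :=
  Module.annihilator R ((Fin m → R) ⧸ LinearMap.range A.mulVecLin)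

lemma annCoker_diag {R : Type*} [CommRing R] (a b : R) :
    annCoker !![a, 0; 0, b] = Ideal.span {a} ⊓ Ideal.span {b} := by
  ext r
  rw [annCoker, Module.mem_annihilator]
  constructor
  · intro h
    rw [Submodule.mem_inf]
    constructor
    · have h0 := h (Submodule.Quotient.mk ![1, 0])
      rw [← Submodule.Quotient.mk_smul, Submodule.Quotient.mk_eq_zero, LinearMap.mem_range] at h0
      obtain ⟨u, hu⟩ := h0
      have := congrArg (fun v => v 0) hu
      simp [Matrix.mulVecLin_apply, Matrix.mulVec, dotProduct, Fin.sum_univ_two] at this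
      rw [Ideal.mem_span_singleton]
      exact ⟨u 0, this.symm⟩
    · have h0 := h (Submodule.Quotient.mk ![0, 1])
      rw [← Submodule.Quotient.mk_smul, Submodule.Quotient.mk_eq_zero, LinearMap.mem_range] at h0
      obtain ⟨u, hu⟩ := h0
      have := congrArg (fun v => v 1) hu
      simp [Matrix.mulVecLin_apply, Matrix.mulVec, dotProduct, Fin.sum_univ_two] at this
      rw [Ideal.mem_span_singleton]
      exact ⟨u 1, this.symm⟩
  · intro hr
    rw [Submodule.mem_inf] at hr
    obtain ⟨ha, hb⟩ := hr
    rw [Ideal.mem_span_singleton] at ha hb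
    obtain ⟨c, hc⟩ := ha
    obtain ⟨c', hc'⟩ := hb
    intro m
    obtain ⟨v, rfl⟩ := Submodule.Quotient.mk_surjective _ m
    rw [← Submodule.Quotient.mk_smul, Submodule.Quotient.mk_eq_zero, LinearMap.mem_range]
    refine ⟨![c * v 0, c' * v 1], ?_⟩
    funext i
    fin_cases i
    · simp only [Matrix.mulVecLin_apply, Matrix.mulVec, dotProduct, Fin.sum_univ_two]
      simp only [Matrix.cons_val', Matrix.cons_val_zero, Matrix.cons_val_one, Matrix.head_cons,
        Matrix.empty_val', Matrix.cons_val_fin_one, Matrix.head_fin_const, Pi.smul_apply,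
        smul_eq_mul, Matrix.cons_val_fin_one]
      show a * (c * v 0) + 0 * (c' * v 1) = r * v 0
      linear_combination (-v 0) * hc
    · simp only [Matrix.mulVecLin_apply, Matrix.mulVec, dotProduct, Fin.sum_univ_two]
      show 0 * (c * v 0) + b * (c' * v 1) = (r • v) 1
      show 0 * (c * v 0) + b * (c' * v 1) = r * v 1
      linear_combination (-v 1) * hc'


set_option maxHeartbeats 1000000 in
/-- In `R = k[[x,y,z,w]]/(xy − zw)`,
`Ann.Coker(diag(x, z)) = (x) ∩ (z) = (xz, xy)`, and this ideal is not principal. -/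
theorem stmt_12 (k : Type*) [Field k] :
    let P := MvPowerSeries (Fin 4) k
    let I : Ideal P := Ideal.span
      {(MvPowerSeries.X 0 : P) * MvPowerSeries.X 1 -
        (MvPowerSeries.X 2 : P) * MvPowerSeries.X 3}
    let R := P ⧸ I
    let x : R := Ideal.Quotient.mk I (MvPowerSeries.X 0)
    let y : R := Ideal.Quotient.mk I (MvPowerSeries.X 1)
    let z : R := Ideal.Quotient.mk I (MvPowerSeries.X 2)
    let A : Matrix (Fin 2) (Fin 2) R := !![x, 0; 0, z]
    annCoker A = Ideal.span {x} ⊓ Ideal.span {z} ∧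
      Ideal.span {x} ⊓ Ideal.span {z} = Ideal.span {x * z, x * y} ∧
      ¬ (annCoker A).IsPrincipal := by
  intro P I R x y z A
  have hI : I = Ideal.span {(MvPowerSeries.X 0 : P) * MvPowerSeries.X 1 -
      (MvPowerSeries.X 2 : P) * MvPowerSeries.X 3} := rfl
  have hx : Ideal.Quotient.mk I (MvPowerSeries.X 0) = x := rfl
  have hy : Ideal.Quotient.mk I (MvPowerSeries.X 1) = y := rfl
  have hz : Ideal.Quotient.mk I (MvPowerSeries.X 2) = z := rfl
  have hδ0 : Ideal.Quotient.mk I ((MvPowerSeries.X 0 : P) * MvPowerSeries.X 1 -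
      (MvPowerSeries.X 2 : P) * MvPowerSeries.X 3) = 0 :=
    Ideal.Quotient.eq_zero_iff_mem.mpr (Ideal.subset_span rfl)
  have hxyzw : x * y = z * Ideal.Quotient.mk I (MvPowerSeries.X 3) := by
    have h1 : x * y - z * Ideal.Quotient.mk I (MvPowerSeries.X 3) = 0 := by
      rw [← hx, ← hy, ← hz, ← map_mul, ← map_mul, ← map_sub]
      exact hδ0
    linear_combination h1
  -- the lifting lemma
  have lift : ∀ u v : P, Ideal.Quotient.mk I u = Ideal.Quotient.mk I v →
      ∃ H : P, u = v + ((MvPowerSeries.X 0 : P) * MvPowerSeries.X 1 -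
        (MvPowerSeries.X 2 : P) * MvPowerSeries.X 3) * H := by
    intro u v huv
    have hmem : u - v ∈ I := Ideal.Quotient.eq.mp huv
    rw [hI, Ideal.mem_span_singleton] at hmem
    obtain ⟨H, hH⟩ := hmem
    exact ⟨H, by linear_combination hH⟩
  -- Part 1
  have h1 : annCoker A = Ideal.span {x} ⊓ Ideal.span {z} := annCoker_diag x z
  -- Part 2
  have h2 : Ideal.span {x} ⊓ Ideal.span {z} = Ideal.span {x * z, x * y} := by
    apply le_antisymm
    · intro r hr
      rw [Submodule.mem_inf] at hr
      obtain ⟨hrx, hrz⟩ := hr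
      rw [Ideal.mem_span_singleton] at hrx hrz
      obtain ⟨f, hf⟩ := hrx
      obtain ⟨g, hg⟩ := hrz
      obtain ⟨F, hF⟩ := Ideal.Quotient.mk_surjective f
      obtain ⟨G, hG⟩ := Ideal.Quotient.mk_surjective g
      obtain ⟨H, hH⟩ := lift (MvPowerSeries.X 0 * F) (MvPowerSeries.X 2 * G) (by
        rw [map_mul, map_mul, hx, hz, hF, hG, ← hf, ← hg])
      have hdvd : (MvPowerSeries.X 0 : P) ∣
          MvPowerSeries.X 2 * (G - MvPowerSeries.X 3 * H) := by
        refine ⟨F - MvPowerSeries.X 1 * H, ?_⟩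
        linear_combination -hH
      have hdvd2 : (MvPowerSeries.X 0 : P) ∣ (G - MvPowerSeries.X 3 * H) :=
        Stmt12.X_dvd_of_dvd_mul (by decide : (2 : Fin 4) ≠ 0) hdvd
      obtain ⟨Q, hQ⟩ := hdvd2
      rw [Ideal.mem_span_pair]
      refine ⟨Ideal.Quotient.mk I Q, Ideal.Quotient.mk I H, ?_⟩
      have hG2 : G = MvPowerSeries.X 3 * H + MvPowerSeries.X 0 * Q := by
        linear_combination hQ
      have hmkG : (g : R) = Ideal.Quotient.mk I (MvPowerSeries.X 3) * Ideal.Quotient.mk I H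
          + x * Ideal.Quotient.mk I Q := by
        rw [← hG, hG2, map_add, map_mul, map_mul, hx]
      calc Ideal.Quotient.mk I Q * (x * z) + Ideal.Quotient.mk I H * (x * y)
          = Ideal.Quotient.mk I Q * (x * z) +
            Ideal.Quotient.mk I H * (z * Ideal.Quotient.mk I (MvPowerSeries.X 3)) := by
            rw [hxyzw]
        _ = z * (Ideal.Quotient.mk I (MvPowerSeries.X 3) * Ideal.Quotient.mk I H
            + x * Ideal.Quotient.mk I Q) := by ring
        _ = z * g := by rw [hmkG]
        _ = r := hg.symm
    · rw [Ideal.span_le]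
      rintro s hs
      simp only [Set.mem_insert_iff, Set.mem_singleton_iff] at hs
      rcases hs with rfl | rfl
      · exact Submodule.mem_inf.mpr ⟨Ideal.mem_span_singleton.mpr ⟨z, rfl⟩,
          Ideal.mem_span_singleton.mpr ⟨x, mul_comm x z⟩⟩
      · refine Submodule.mem_inf.mpr ⟨Ideal.mem_span_singleton.mpr ⟨y, rfl⟩,
          Ideal.mem_span_singleton.mpr ⟨Ideal.Quotient.mk I (MvPowerSeries.X 3), hxyzw⟩⟩
  refine ⟨h1, h2, ?_⟩
  -- Part 3
  rintro ⟨⟨d, hd⟩⟩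
  rw [h1] at hd
  have hdmem : d ∈ Ideal.span {x} ⊓ Ideal.span {z} := by
    rw [hd]; exact Ideal.mem_span_singleton_self d
  obtain ⟨hdx, hdz⟩ := Submodule.mem_inf.mp hdmem
  obtain ⟨a, hda⟩ := Ideal.mem_span_singleton.mp hdx
  obtain ⟨b, hdb⟩ := Ideal.mem_span_singleton.mp hdz
  have hxz_in : x * z ∈ Submodule.span R {d} := by
    rw [← hd]
    exact Submodule.mem_inf.mpr ⟨Ideal.mem_span_singleton.mpr ⟨z, rfl⟩,
      Ideal.mem_span_singleton.mpr ⟨x, mul_comm x z⟩⟩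
  have hxy_in : x * y ∈ Submodule.span R {d} := by
    rw [← hd]
    exact Submodule.mem_inf.mpr ⟨Ideal.mem_span_singleton.mpr ⟨y, rfl⟩,
      Ideal.mem_span_singleton.mpr ⟨Ideal.Quotient.mk I (MvPowerSeries.X 3), hxyzw⟩⟩
  obtain ⟨e, he⟩ := Ideal.mem_span_singleton.mp hxz_in
  obtain ⟨e', he'⟩ := Ideal.mem_span_singleton.mp hxy_in
  -- lift to P
  obtain ⟨D0, hD0⟩ := Ideal.Quotient.mk_surjective d
  obtain ⟨A0, hA0⟩ := Ideal.Quotient.mk_surjective a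
  obtain ⟨B0, hB0⟩ := Ideal.Quotient.mk_surjective b
  obtain ⟨E0, hE0⟩ := Ideal.Quotient.mk_surjective e
  obtain ⟨E0', hE0'⟩ := Ideal.Quotient.mk_surjective e'
  obtain ⟨H1, hH1⟩ := lift D0 (MvPowerSeries.X 0 * A0) (by
    rw [map_mul, hx, hD0, hA0, ← hda])
  obtain ⟨H2, hH2⟩ := lift D0 (MvPowerSeries.X 2 * B0) (by
    rw [map_mul, hz, hD0, hB0, ← hdb])
  obtain ⟨H3, hH3⟩ := lift (MvPowerSeries.X 0 * MvPowerSeries.X 2) (D0 * E0) (by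
    rw [map_mul, map_mul, hx, hz, hD0, hE0, ← he])
  obtain ⟨H4, hH4⟩ := lift (MvPowerSeries.X 0 * MvPowerSeries.X 1) (D0 * E0') (by
    rw [map_mul, map_mul, hx, hy, hD0, hE0', ← he'])
  -- push into two-variable power series
  classical
  let S := MvPowerSeries (Fin 2) k
  let Ψ1 : P →+* S := Stmt12.renameHom ![0, 1, 1, 0]
  let Ψ2 : P →+* S := Stmt12.renameHom ![0, 1, 0, 1]
  let χ : S →+* MvPowerSeries Unit k := Stmt12.renameHom (fun _ => ())
  have hΨ1X : ∀ i : Fin 4, Ψ1 (MvPowerSeries.X i) = MvPowerSeries.X (![0, 1, 1, 0] i) :=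
    fun i => Stmt12.rename_X _ i
  have hΨ2X : ∀ i : Fin 4, Ψ2 (MvPowerSeries.X i) = MvPowerSeries.X (![0, 1, 0, 1] i) :=
    fun i => Stmt12.rename_X _ i
  have hχX : ∀ i : Fin 2, χ (MvPowerSeries.X i) = MvPowerSeries.X () :=
    fun i => Stmt12.rename_X _ i
  have hΨ1δ : Ψ1 ((MvPowerSeries.X 0 : P) * MvPowerSeries.X 1 -
      (MvPowerSeries.X 2 : P) * MvPowerSeries.X 3) = 0 := by
    rw [map_sub, map_mul, map_mul, hΨ1X 0, hΨ1X 1, hΨ1X 2, hΨ1X 3]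
    show (MvPowerSeries.X 0 : S) * MvPowerSeries.X 1 -
      (MvPowerSeries.X 1 : S) * MvPowerSeries.X 0 = 0
    ring
  have hΨ2δ : Ψ2 ((MvPowerSeries.X 0 : P) * MvPowerSeries.X 1 -
      (MvPowerSeries.X 2 : P) * MvPowerSeries.X 3) = 0 := by
    rw [map_sub, map_mul, map_mul, hΨ2X 0, hΨ2X 1, hΨ2X 2, hΨ2X 3]
    show (MvPowerSeries.X 0 : S) * MvPowerSeries.X 1 -
      (MvPowerSeries.X 0 : S) * MvPowerSeries.X 1 = 0
    ring
  -- equations under Ψ1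
  have q1 : Ψ1 D0 = MvPowerSeries.X 0 * Ψ1 A0 := by
    have := congrArg Ψ1 hH1
    rw [map_add, map_mul, map_mul, hΨ1δ, zero_mul, add_zero, hΨ1X 0] at this
    exact this
  have q2 : Ψ1 D0 = MvPowerSeries.X 1 * Ψ1 B0 := by
    have := congrArg Ψ1 hH2
    rw [map_add, map_mul, map_mul, hΨ1δ, zero_mul, add_zero, hΨ1X 2] at this
    exact this
  have q3 : (MvPowerSeries.X 0 : S) * MvPowerSeries.X 1 = Ψ1 D0 * Ψ1 E0 := by
    have := congrArg Ψ1 hH3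
    rw [map_add, map_mul, map_mul, map_mul, hΨ1δ, zero_mul, add_zero, hΨ1X 0, hΨ1X 2] at this
    exact this
  -- X 1 divides Ψ1 A0
  have hv_dvd : (MvPowerSeries.X 1 : S) ∣ MvPowerSeries.X 0 * Ψ1 A0 :=
    ⟨Ψ1 B0, by rw [← q1, q2]⟩
  have hv_dvd2 : (MvPowerSeries.X 1 : S) ∣ Ψ1 A0 :=
    Stmt12.X_dvd_of_dvd_mul (by decide : (0 : Fin 2) ≠ 1) hv_dvd
  obtain ⟨C, hC⟩ := hv_dvd2
  have hCE : C * Ψ1 E0 = 1 := by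
    have huv : (MvPowerSeries.X 0 : S) * MvPowerSeries.X 1 ≠ 0 :=
      mul_ne_zero (Stmt12.X_ne_zero 0) (Stmt12.X_ne_zero 1)
    refine mul_left_cancel₀ huv ?_
    rw [mul_one]
    calc (MvPowerSeries.X 0 : S) * MvPowerSeries.X 1 * (C * Ψ1 E0)
        = (MvPowerSeries.X 0 * (MvPowerSeries.X 1 * C)) * Ψ1 E0 := by ring
      _ = Ψ1 D0 * Ψ1 E0 := by rw [← hC, ← q1]
      _ = MvPowerSeries.X 0 * MvPowerSeries.X 1 := q3.symm
  -- equations under Ψ2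
  have p1 : Ψ2 D0 = MvPowerSeries.X 0 * Ψ2 A0 := by
    have := congrArg Ψ2 hH1
    rw [map_add, map_mul, map_mul, hΨ2δ, zero_mul, add_zero, hΨ2X 0] at this
    exact this
  have p3 : (MvPowerSeries.X 0 : S) * MvPowerSeries.X 0 = Ψ2 D0 * Ψ2 E0 := by
    have := congrArg Ψ2 hH3
    rw [map_add, map_mul, map_mul, map_mul, hΨ2δ, zero_mul, add_zero, hΨ2X 0, hΨ2X 2] at this
    exact this
  have p4 : (MvPowerSeries.X 0 : S) * MvPowerSeries.X 1 = Ψ2 D0 * Ψ2 E0' := by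
    have := congrArg Ψ2 hH4
    rw [map_add, map_mul, map_mul, map_mul, hΨ2δ, zero_mul, add_zero, hΨ2X 0, hΨ2X 1] at this
    exact this
  have hu_ne : (MvPowerSeries.X 0 : S) ≠ 0 := Stmt12.X_ne_zero 0
  have pu : (MvPowerSeries.X 0 : S) = Ψ2 A0 * Ψ2 E0 := by
    refine mul_left_cancel₀ hu_ne ?_
    rw [p3, p1]; ring
  have pv : (MvPowerSeries.X 1 : S) = Ψ2 A0 * Ψ2 E0' := by
    refine mul_left_cancel₀ hu_ne ?_
    rw [p4, p1]; ring
  -- Ψ2 A0 is a unit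
  have h0 : Stmt12.pzero 0 (Ψ2 A0) * Stmt12.pzero 0 (Ψ2 E0) = 0 := by
    rw [← map_mul, ← pu, Stmt12.pzero_X_self]
  have hA2F : ∃ F : S, Ψ2 A0 * F = 1 := by
    rcases mul_eq_zero.mp h0 with hh | hh
    · exfalso
      obtain ⟨A2', hA2'⟩ := (Stmt12.pzero_eq_zero_iff 0).mp hh
      have : (MvPowerSeries.X 0 : S) ∣ MvPowerSeries.X 1 :=
        ⟨A2' * Ψ2 E0', by rw [pv, hA2']; ring⟩
      rw [← Stmt12.pzero_eq_zero_iff, Stmt12.pzero_X_of_ne 0 (by decide : (1 : Fin 2) ≠ 0)] at this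
      exact Stmt12.X_ne_zero 1 this
    · obtain ⟨F, hF⟩ := (Stmt12.pzero_eq_zero_iff 0).mp hh
      refine ⟨F, mul_left_cancel₀ hu_ne ?_⟩
      rw [mul_one]
      calc (MvPowerSeries.X 0 : S) * (Ψ2 A0 * F) = Ψ2 A0 * (MvPowerSeries.X 0 * F) := by ring
        _ = Ψ2 A0 * Ψ2 E0 := by rw [← hF]
        _ = MvPowerSeries.X 0 := pu.symm
  obtain ⟨F, hF1⟩ := hA2F
  -- compare via χ
  have hcomp : χ (Ψ1 D0) = χ (Ψ2 D0) := by
    show Stmt12.rename (fun _ => ()) (Stmt12.rename ![0, 1, 1, 0] D0) =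
      Stmt12.rename (fun _ => ()) (Stmt12.rename ![0, 1, 0, 1] D0)
    rw [Stmt12.rename_comp, Stmt12.rename_comp]
    congr 1
  have hχD1 : χ (Ψ1 D0) = MvPowerSeries.X () * (MvPowerSeries.X () * χ C) := by
    rw [q1, hC]  -- Ψ1 D0 = X0 * (X1 * C)
    rw [map_mul, map_mul, hχX 0, hχX 1]
  have hχD2 : χ (Ψ2 D0) = MvPowerSeries.X () * χ (Ψ2 A0) := by
    rw [p1, map_mul, hχX 0]
  have hkey : MvPowerSeries.X () * (MvPowerSeries.X () * χ C) =
      MvPowerSeries.X () * χ (Ψ2 A0) := by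
    rw [← hχD1, hcomp, hχD2]
  have hcancel : MvPowerSeries.X () * χ C = χ (Ψ2 A0) :=
    mul_left_cancel₀ (Stmt12.X_ne_zero ()) hkey
  have hunit : MvPowerSeries.constantCoeff (σ := Unit) (R := k) (χ (Ψ2 A0)) *
      MvPowerSeries.constantCoeff (σ := Unit) (R := k) (χ F) = 1 := by
    rw [← map_mul, ← map_mul, hF1, map_one, map_one]
  have hzero : MvPowerSeries.constantCoeff (σ := Unit) (R := k) (χ (Ψ2 A0)) = 0 := by
    rw [← hcancel, map_mul, MvPowerSeries.constantCoeff_X, zero_mul]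
  rw [hzero, zero_mul] at hunit
  exact zero_ne_one hunit
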